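/- For any j ∈ {1,…,n}, the union over j of the intervals [Σ_{i=1}^j a_{i,1}, Σ_{i=1}^j a_{i,2}] intersected with (Σ_{i=1}^{j-1} a_{i,2}, Σ_{i=1}^{j} a_{i,2}] has total length at least Σ_{j=2}^n min( Σ_{i=1}^j (1 − 1/c)·a_{i,2}, a_{j,2} ), provided a_{i,2} ≥ c·a_{i,1} for all i with c > 1. -/

import Mathlib

open MeasureTheory

lemma stmt6_ofReal_sum_le (s : Finset ℕ) (f : ℕ → ℝ) :
    ENNReal.ofReal (∑ j ∈ s, f j) ≤ ∑ j ∈ s, ENNReal.ofReal (f j) := by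
  induction s using Finset.induction with
  | empty => simp
  | insert _ _ h ih =>
    rw [Finset.sum_insert h, Finset.sum_insert h]
    exact ENNReal.ofReal_add_le.trans (add_le_add_right ih _)

lemma stmt6_helper (s : Finset ℕ) (S : ℕ → Set ℝ) (f : ℕ → ℝ)
    (hmeas : ∀ j ∈ s, MeasurableSet (S j))
    (hdisj : (s : Set ℕ).PairwiseDisjoint S)
    (hle : ∀ j ∈ s, ENNReal.ofReal (f j) ≤ volume (S j)) :
    volume (⋃ j ∈ s, S j) ≥ ENNReal.ofReal (∑ j ∈ s, f j) := by
  rw [measure_biUnion_finset hdisj hmeas]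
  calc ENNReal.ofReal (∑ j ∈ s, f j) ≤ ∑ j ∈ s, ENNReal.ofReal (f j) :=
        stmt6_ofReal_sum_le s f
    _ ≤ ∑ j ∈ s, volume (S j) := Finset.sum_le_sum hle

/-- The union over `j` of `[Σ_{i≤j} a_{i,1}, Σ_{i≤j} a_{i,2}] ∩ (Σ_{i<j} a_{i,2}, Σ_{i≤j} a_{i,2}]`
has total length at least `Σ_j min(Σ_{i≤j} (1-1/c) a_{i,2}, a_{j,2})`, provided
`a_{i,2} ≥ c a_{i,1}` for all `i` with `c > 1`. (Indices shifted so that `i = 0,…,n-1`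
and `a_{0,2} = maxᵢ a_{i,2}`.) -/
theorem stmt6 (n : ℕ) (hn : 2 ≤ n) (a1 a2 : ℕ → ℤ) (c : ℝ) (hc : 1 < c)
    (hpos : ∀ i < n, 0 < a1 i) (hle : ∀ i < n, a1 i ≤ a2 i)
    (hca : ∀ i < n, c * (a1 i : ℝ) ≤ (a2 i : ℝ))
    (hmax : ∀ i < n, a2 i ≤ a2 0) :
    volume (⋃ j ∈ Finset.Ico 1 n,
        (Set.Icc ((∑ i ∈ Finset.range (j + 1), a1 i : ℤ) : ℝ)
                 ((∑ i ∈ Finset.range (j + 1), a2 i : ℤ) : ℝ) ∩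
         Set.Ioc ((∑ i ∈ Finset.range j, a2 i : ℤ) : ℝ)
                 ((∑ i ∈ Finset.range (j + 1), a2 i : ℤ) : ℝ))) ≥
      ENNReal.ofReal (∑ j ∈ Finset.Ico 1 n,
        min (∑ i ∈ Finset.range (j + 1), (1 - 1 / c) * ((a2 i : ℤ) : ℝ))
            ((a2 j : ℝ))) := by
  have hc0 : (0:ℝ) < c := lt_trans one_pos hc
  have h2pos : ∀ i < n, 0 < a2 i := fun i hi => lt_of_lt_of_le (hpos i hi) (hle i hi)
  apply stmt6_helper
  · intro j _
    exact (measurableSet_Icc.inter measurableSet_Ioc)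
  · -- pairwise disjoint
    have key : ∀ j k, j < k → k < n →
        Disjoint (Set.Icc ((∑ i ∈ Finset.range (j + 1), a1 i : ℤ) : ℝ)
                 ((∑ i ∈ Finset.range (j + 1), a2 i : ℤ) : ℝ) ∩
         Set.Ioc ((∑ i ∈ Finset.range j, a2 i : ℤ) : ℝ)
                 ((∑ i ∈ Finset.range (j + 1), a2 i : ℤ) : ℝ))
          (Set.Icc ((∑ i ∈ Finset.range (k + 1), a1 i : ℤ) : ℝ)
                 ((∑ i ∈ Finset.range (k + 1), a2 i : ℤ) : ℝ) ∩
         Set.Ioc ((∑ i ∈ Finset.range k, a2 i : ℤ) : ℝ)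
                 ((∑ i ∈ Finset.range (k + 1), a2 i : ℤ) : ℝ)) := by
      intro j k hlt hkn
      have hmono : (∑ i ∈ Finset.range (j+1), a2 i) ≤ ∑ i ∈ Finset.range k, a2 i := by
        apply Finset.sum_le_sum_of_subset_of_nonneg
        · exact Finset.range_subset_range.mpr (by omega)
        · intro i hi _
          exact le_of_lt (h2pos i (by have := Finset.mem_range.mp hi; omega))
      rw [Set.disjoint_left]
      rintro x ⟨hx1, hx2⟩ ⟨hy1, hy2⟩
      have h1 : x ≤ ((∑ i ∈ Finset.range (j+1), a2 i : ℤ) : ℝ) := hx2.2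
      have h2 : ((∑ i ∈ Finset.range k, a2 i : ℤ) : ℝ) < x := hy2.1
      have : ((∑ i ∈ Finset.range (j+1), a2 i : ℤ) : ℝ) ≤ ((∑ i ∈ Finset.range k, a2 i : ℤ) : ℝ) := by
        exact_mod_cast hmono
      linarith
    intro j hj k hk hjk
    simp only [Finset.coe_Ico, Set.mem_Ico] at hj hk
    simp only [Function.onFun]
    rcases lt_or_gt_of_ne hjk with h | h
    · exact key j k h hk.2
    · exact (key k j h hj.2).symm
  · -- per-term bound
    intro j hj
    rw [Finset.mem_Ico] at hj
    set A1 : ℝ := ((∑ i ∈ Finset.range (j+1), a1 i : ℤ) : ℝ) with hA1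
    set B : ℝ := ((∑ i ∈ Finset.range j, a2 i : ℤ) : ℝ) with hB
    set B' : ℝ := ((∑ i ∈ Finset.range (j+1), a2 i : ℤ) : ℝ) with hB'
    have hsub : Set.Ioc (max A1 B) B' ⊆ Set.Icc A1 B' ∩ Set.Ioc B B' := by
      rintro x ⟨hx1, hx2⟩
      exact ⟨⟨le_of_lt (lt_of_le_of_lt (le_max_left _ _) hx1), hx2⟩,
             lt_of_le_of_lt (le_max_right _ _) hx1, hx2⟩
    refine le_trans ?_ (measure_mono hsub)
    rw [Real.volume_Ioc]
    apply ENNReal.ofReal_le_ofReal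
    have hdiff : B' - B = ((a2 j : ℤ) : ℝ) := by
      rw [hB, hB', Finset.sum_range_succ]
      push_cast
      ring
    have hTle : (∑ i ∈ Finset.range (j+1), (1 - 1 / c) * ((a2 i : ℤ) : ℝ)) ≤ B' - A1 := by
      rw [hA1, hB']
      push_cast
      rw [← Finset.sum_sub_distrib]
      apply Finset.sum_le_sum
      intro i hi
      have hin : i < n := by have := Finset.mem_range.mp hi; omega
      have h1 : (a1 i : ℝ) ≤ (a2 i : ℝ) / c := by
        rw [le_div_iff₀ hc0]
        linarith [hca i hin]
      have h2 : (0 : ℝ) < (a2 i : ℝ) := by exact_mod_cast h2pos i hin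
      have : (1 - 1 / c) * ((a2 i : ℤ) : ℝ) = (a2 i : ℝ) - (a2 i : ℝ) / c := by
        push_cast; ring
      rw [this]
      linarith
    have : B' - max A1 B = min (B' - A1) (B' - B) := by
      rcases le_total A1 B with h | h
      · rw [max_eq_right h, min_eq_right (by linarith)]
      · rw [max_eq_left h, min_eq_left (by linarith)]
    rw [this, hdiff]
    exact min_le_min hTle le_rfl
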